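/- Let K be a number field equipped with a field embedding σ : K ↪ ℚ_p for some prime p. Then there exists a constant c₅ > 0, depending only on K and σ, such that for every natural number n and every nonzero α ∈ K with |σ(α)|_p ≤ p^{−n}, one has h(α) ≥ c₅·n, where h denotes the logarithmic Weil height. -/

import Mathlib

open NumberField Filter
open scoped nonZeroDivisors

/-- The denominator ideal of an element `α` of a number field `K`: the ideal of all
algebraic integers `x` such that `x * α` is again an algebraic integer. -/
noncomputable def denIdeal (K : Type*) [Field K] [NumberField K] (α : K) :
    Ideal (𝓞 K) where
  carrier := {x | ∃ y : 𝓞 K, (algebraMap (𝓞 K) K y) = (algebraMap (𝓞 K) K x) * α}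
  add_mem' := by
    rintro a b ⟨ya, ha⟩ ⟨yb, hb⟩
    exact ⟨ya + yb, by rw [map_add, map_add, ha, hb]; ring⟩
  zero_mem' := ⟨0, by simp⟩
  smul_mem' := by
    rintro c x ⟨y, hy⟩
    exact ⟨c * y, by rw [smul_eq_mul, map_mul, map_mul, hy]; ring⟩

/-- The absolute logarithmic Weil height of an element of a number field, defined as
`(1/[K:ℚ]) * (∑_{w infinite} mult(w) log⁺ w(α) + log N(denominator ideal of α))`. -/
noncomputable def weilHeight (K : Type*) [Field K] [NumberField K] (α : K) : ℝ :=
  (Module.finrank ℚ K : ℝ)⁻¹ *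
    ((∑ w : InfinitePlace K, (w.mult : ℝ) * Real.log (max (w α) 1)) +
      Real.log (Ideal.absNorm (denIdeal K α)))

/-- The numerator ideal: elements of the form `x * α` with `x` in the denominator ideal. -/
noncomputable def numIdealX (K : Type*) [Field K] [NumberField K] (α : K) :
    Ideal (𝓞 K) where
  carrier := {y | ∃ x ∈ denIdeal K α, (algebraMap (𝓞 K) K y) = (algebraMap (𝓞 K) K x) * α}
  add_mem' := by
    rintro a b ⟨xa, hxa, ha⟩ ⟨xb, hxb, hb⟩
    exact ⟨xa + xb, add_mem hxa hxb, by rw [map_add, map_add, ha, hb]; ring⟩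
  zero_mem' := ⟨0, zero_mem _, by simp⟩
  smul_mem' := by
    rintro c y ⟨x, hx, hxy⟩
    exact ⟨c * x, (denIdeal K α).mul_mem_left c hx,
      by rw [smul_eq_mul, map_mul, map_mul, hxy]; ring⟩

theorem numIdealX_coe (K : Type*) [Field K] [NumberField K] (α : K) :
    ((numIdealX K α : FractionalIdeal (𝓞 K)⁰ K)) =
      (denIdeal K α : FractionalIdeal (𝓞 K)⁰ K) * FractionalIdeal.spanSingleton (𝓞 K)⁰ α := by
  rw [mul_comm]
  ext z
  rw [FractionalIdeal.mem_singleton_mul]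
  simp only [FractionalIdeal.mem_coeIdeal]
  constructor
  · rintro ⟨y, ⟨x, hx, hxy⟩, rfl⟩
    exact ⟨algebraMap (𝓞 K) K x, ⟨x, hx, rfl⟩, by rw [hxy, mul_comm]⟩
  · rintro ⟨y', hy', rfl⟩
    obtain ⟨x, hx, rfl⟩ := hy'
    have hx2 := hx
    obtain ⟨y, hy⟩ := hx2
    exact ⟨y, ⟨x, hx, hy⟩, by rw [hy, mul_comm]⟩

theorem padic_norm_le_one (p : ℕ) [Fact p.Prime] (K : Type*) [Field K] [NumberField K]
    (σ : K →+* ℚ_[p]) (x : 𝓞 K) : ‖σ (algebraMap (𝓞 K) K x)‖ ≤ 1 := by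
  have h1 : IsIntegral ℤ (σ (algebraMap (𝓞 K) K x)) :=
    (RingOfIntegers.isIntegral_coe x).map σ.toIntAlgHom
  have h2 : IsIntegral ℤ_[p] (σ (algebraMap (𝓞 K) K x)) := h1.tower_top
  obtain ⟨y, hy⟩ := IsIntegrallyClosed.isIntegral_iff.mp h2
  rw [← hy]
  exact y.norm_le_one

/-- Restriction of an embedding `K → ℚ_p` to a map `𝓞 K → ℤ_p`. -/
noncomputable def padicRestrict (p : ℕ) [Fact p.Prime] (K : Type*) [Field K] [NumberField K]
    (σ : K →+* ℚ_[p]) : 𝓞 K →+* ℤ_[p] where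
  toFun x := ⟨σ (algebraMap (𝓞 K) K x), padic_norm_le_one p K σ x⟩
  map_one' := Subtype.ext (by simp)
  map_mul' x y := Subtype.ext (by simp; rfl)
  map_zero' := Subtype.ext (by simp)
  map_add' x y := Subtype.ext (by simp; rfl)


set_option synthInstance.maxHeartbeats 1000000 in
/-- if `K` is a number field with an embedding `σ : K ↪ ℚ_p`, then there is a
constant `c₅ > 0` such that any nonzero `α ∈ K` with `|σ(α)|_p ≤ p^{-n}` has `h(α) ≥ c₅ n`. -/
theorem height_lower_bound_of_small_padic_norm
    (p : ℕ) [Fact p.Prime] (K : Type*) [Field K] [NumberField K]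
    (σ : K →+* ℚ_[p]) :
    ∃ c₅ : ℝ, 0 < c₅ ∧ ∀ n : ℕ, ∀ α : K, α ≠ 0 →
      ‖σ α‖ ≤ (p : ℝ) ^ (-(n : ℤ)) → c₅ * n ≤ weilHeight K α := by
  have hp : 1 < (p : ℝ) := by exact_mod_cast (Fact.out : p.Prime).one_lt
  have hd : 0 < (Module.finrank ℚ K : ℝ) := by exact_mod_cast Module.finrank_pos
  refine ⟨Real.log p / Module.finrank ℚ K, div_pos (Real.log_pos hp) hd, fun n α hα hnorm => ?_⟩
  -- the restricted ring hom and its mod-p^n reduction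
  set f := padicRestrict p K σ with hf
  set g := (PadicInt.toZModPow n).comp f with hg
  have hgsurj : Function.Surjective g := by
    intro z
    obtain ⟨m, rfl⟩ := ZMod.intCast_surjective z
    exact ⟨(m : 𝓞 K), by rw [map_intCast]⟩
  have hker : Ideal.absNorm (RingHom.ker g) = p ^ n := by
    rw [Ideal.absNorm_apply, Submodule.cardQuot_apply,
      Nat.card_congr (RingHom.quotientKerEquivOfSurjective hgsurj).toEquiv, Nat.card_zmod]
  -- the numerator ideal is contained in the kernel
  have hle : numIdealX K α ≤ RingHom.ker g := by
    rintro y ⟨x, hx, hxy⟩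
    rw [RingHom.mem_ker, hg, RingHom.comp_apply, ← RingHom.mem_ker, PadicInt.ker_toZModPow,
      ← PadicInt.norm_le_pow_iff_mem_span_pow]
    have : ‖f y‖ = ‖σ (algebraMap (𝓞 K) K y)‖ := rfl
    rw [this, hxy, map_mul]
    calc ‖σ (algebraMap (𝓞 K) K x) * σ α‖ = ‖σ (algebraMap (𝓞 K) K x)‖ * ‖σ α‖ := norm_mul _ _
      _ ≤ 1 * ((p : ℝ) ^ (-(n : ℤ))) :=
        mul_le_mul (padic_norm_le_one p K σ x) hnorm (norm_nonneg _) zero_le_one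
      _ = (p : ℝ) ^ (-(n : ℤ)) := one_mul _
  -- nontriviality
  obtain ⟨b, a, ha⟩ := IsLocalization.exists_integer_multiple (𝓞 K)⁰ α
  have hbα : algebraMap (𝓞 K) K a = algebraMap (𝓞 K) K (b : 𝓞 K) * α := by
    rw [ha]
    exact Algebra.smul_def _ _
  have hbden : (b : 𝓞 K) ∈ denIdeal K α := ⟨a, hbα⟩
  have hanum : a ∈ numIdealX K α := ⟨b, hbden, hbα⟩
  have hane : a ≠ 0 := by
    intro h0
    apply hα
    have hb0 : algebraMap (𝓞 K) K (b : 𝓞 K) ≠ 0 := by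
      simpa using nonZeroDivisors.coe_ne_zero b
    have := hbα
    rw [h0, map_zero] at this
    exact (mul_eq_zero.mp this.symm).resolve_left hb0
  have hnum_ne : numIdealX K α ≠ ⊥ := fun h => hane (by simpa [h] using hanum)
  have hden_ne : denIdeal K α ≠ ⊥ := fun h => by
    rw [h] at hbden
    exact nonZeroDivisors.coe_ne_zero b (by simpa using hbden)
  have hNnum_pos : 0 < Ideal.absNorm (numIdealX K α) :=
    Nat.pos_of_ne_zero (fun h => hnum_ne (Ideal.absNorm_eq_zero_iff.mp h))
  have hNden_pos : 0 < Ideal.absNorm (denIdeal K α) :=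
    Nat.pos_of_ne_zero (fun h => hden_ne (Ideal.absNorm_eq_zero_iff.mp h))
  -- p^n ≤ N(numIdealX)
  have hdvd : p ^ n ∣ Ideal.absNorm (numIdealX K α) := by
    rw [← hker]; exact Ideal.absNorm_dvd_absNorm_of_le hle
  have hpn_le : (p : ℝ) ^ n ≤ (Ideal.absNorm (numIdealX K α) : ℝ) := by
    exact_mod_cast Nat.le_of_dvd hNnum_pos hdvd
  -- norm factorization
  have hfac : (Ideal.absNorm (numIdealX K α) : ℚ) =
      (Ideal.absNorm (denIdeal K α) : ℚ) * |Algebra.norm ℚ α| := by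
    have := congrArg FractionalIdeal.absNorm (numIdealX_coe K α)
    rwa [map_mul, FractionalIdeal.coeIdeal_absNorm, FractionalIdeal.coeIdeal_absNorm,
      FractionalIdeal.absNorm_span_singleton] at this
  have hfacR : (Ideal.absNorm (numIdealX K α) : ℝ) =
      (Ideal.absNorm (denIdeal K α) : ℝ) * ∏ w : InfinitePlace K, (w α) ^ w.mult := by
    rw [InfinitePlace.prod_eq_abs_norm]
    exact_mod_cast congrArg (Rat.cast : ℚ → ℝ) hfac
  -- bound by max
  have hprodle : ∏ w : InfinitePlace K, (w α) ^ w.mult ≤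
      ∏ w : InfinitePlace K, (max (w α) 1) ^ w.mult :=
    Finset.prod_le_prod (fun w _ => pow_nonneg (apply_nonneg w α) _)
      (fun w _ => pow_le_pow_left₀ (apply_nonneg w α) (le_max_left _ _) _)
  have hmaxpos : ∀ w : InfinitePlace K, (0:ℝ) < max (w α) 1 :=
    fun w => lt_of_lt_of_le one_pos (le_max_right _ _)
  have hprodpos : (0:ℝ) < ∏ w : InfinitePlace K, (max (w α) 1) ^ w.mult :=
    Finset.prod_pos (fun w _ => pow_pos (hmaxpos w) _)
  have hkey : (p:ℝ) ^ n ≤ (Ideal.absNorm (denIdeal K α) : ℝ) *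
      ∏ w : InfinitePlace K, (max (w α) 1) ^ w.mult := by
    calc (p:ℝ) ^ n ≤ (Ideal.absNorm (numIdealX K α) : ℝ) := hpn_le
      _ = _ := hfacR
      _ ≤ _ := by
        apply mul_le_mul_of_nonneg_left hprodle (by positivity)
  -- take logs
  have hlog : (n : ℝ) * Real.log p ≤
      (∑ w : InfinitePlace K, (w.mult : ℝ) * Real.log (max (w α) 1)) +
        Real.log (Ideal.absNorm (denIdeal K α)) := by
    have h1 : Real.log ((p:ℝ) ^ n) ≤ Real.log ((Ideal.absNorm (denIdeal K α) : ℝ) *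
        ∏ w : InfinitePlace K, (max (w α) 1) ^ w.mult) :=
      Real.log_le_log (by positivity) hkey
    rw [Real.log_pow, Real.log_mul (by positivity) (ne_of_gt hprodpos),
      Real.log_prod (fun w _ => ne_of_gt (pow_pos (hmaxpos w) _))] at h1
    simp_rw [Real.log_pow] at h1
    linarith
  -- conclude
  rw [weilHeight, div_mul_eq_mul_div, div_le_iff₀ hd]
  calc Real.log p * n = n * Real.log p := mul_comm _ _
    _ ≤ _ := hlog
    _ = (Module.finrank ℚ K : ℝ)⁻¹ * ((∑ w : InfinitePlace K, (w.mult : ℝ) *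
          Real.log (max (w α) 1)) + Real.log (Ideal.absNorm (denIdeal K α))) *
          (Module.finrank ℚ K : ℝ) := by
        field_simp
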